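/- With α_n = (∑_{i=1}^n 1_{A_i}) / (∑_{i=1}^n P(A_i)) for events A_n of positive probability with ∑ P(A_n) = ∞, one has sup_{p ∈ (0,∞)\{1}} (limsup_{n→∞} E[α_n^p])^{1/(1−p)} = lim_{p→0+} limsup_{n→∞} E[α_n^p]. -/

import Mathlib

open MeasureTheory Filter Set
open scoped ENNReal

lemma hoelder_interp {Ω : Type*} [MeasurableSpace Ω] (μ : Measure Ω) (f g : Ω → ℝ≥0∞)
    (hf : AEMeasurable f μ) (hg : AEMeasurable g μ) {θ : ℝ} (h0 : 0 < θ) (h1 : θ < 1) :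
    ∫⁻ ω, f ω ^ θ * g ω ^ (1 - θ) ∂μ ≤
      (∫⁻ ω, f ω ∂μ) ^ θ * (∫⁻ ω, g ω ∂μ) ^ (1 - θ) := by
  have h1' : 0 < 1 - θ := by linarith
  have hpq : Real.HolderConjugate (1/θ) (1/(1-θ)) :=
    Real.holderConjugate_one_div h0 h1' (by ring)
  have := ENNReal.lintegral_mul_le_Lp_mul_Lq μ hpq
      (f := fun ω => f ω ^ θ) (g := fun ω => g ω ^ (1-θ))
      (hf.pow_const θ) (hg.pow_const (1-θ))
  simpa [← ENNReal.rpow_mul, mul_inv_cancel₀ h0.ne', mul_inv_cancel₀ h1'.ne',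
    ENNReal.rpow_one, one_div_one_div] using this

section Key
variable {Ω : Type*} [MeasurableSpace Ω] {μ : Measure Ω} [IsProbabilityMeasure μ]
  {X : Ω → ℝ} (hm : Measurable X) (h0 : ∀ ω, 0 ≤ X ω) {C : ℝ} (hC : ∀ ω, X ω ≤ C)
  (hint : ∫ ω, X ω ∂μ = 1)

include hm h0 hC in
lemma rpow_integrable {r : ℝ} (hr : 0 < r) : Integrable (fun ω => X ω ^ r) μ := by
  set D := max C 0 with hD
  have hXD : ∀ ω, X ω ≤ D := fun ω => le_trans (hC ω) (le_max_left _ _)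
  refine Integrable.mono' (integrable_const (D ^ r)) ((hm.pow measurable_const).aestronglyMeasurable)
    (Filter.Eventually.of_forall fun ω => ?_)
  rw [Real.norm_eq_abs, abs_of_nonneg (Real.rpow_nonneg (h0 ω) r)]
  exact Real.rpow_le_rpow (h0 ω) (hXD ω) hr.le

include hm h0 hC in
lemma conv_eq {r : ℝ} (hr : 0 < r) :
    ENNReal.ofReal (∫ ω, X ω ^ r ∂μ) = ∫⁻ ω, (ENNReal.ofReal (X ω)) ^ r ∂μ := by
  rw [ofReal_integral_eq_lintegral_ofReal (rpow_integrable hm h0 hC hr)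
    (Filter.Eventually.of_forall fun ω => Real.rpow_nonneg (h0 ω) r)]
  exact lintegral_congr fun ω => by
    rw [ENNReal.ofReal_rpow_of_nonneg (h0 ω) hr.le]

include hm h0 hC hint in
lemma lint_one : ∫⁻ ω, ENNReal.ofReal (X ω) ∂μ = 1 := by
  have hXint : Integrable X μ := by
    have hXD : ∀ ω, X ω ≤ max C 0 := fun ω => le_trans (hC ω) (le_max_left _ _)
    refine Integrable.mono' (integrable_const (max C 0)) hm.aestronglyMeasurable
      (Filter.Eventually.of_forall fun ω => ?_)
    rw [Real.norm_eq_abs, abs_of_nonneg (h0 ω)]; exact hXD ω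
  rw [← ofReal_integral_eq_lintegral_ofReal hXint
    (Filter.Eventually.of_forall h0), hint, ENNReal.ofReal_one]

include hm h0 hC hint in
lemma jensen_le_one {q : ℝ} (hq0 : 0 < q) (hq1 : q < 1) : ∫ ω, X ω ^ q ∂μ ≤ 1 := by
  have hmG : AEMeasurable (fun ω => ENNReal.ofReal (X ω)) μ :=
    (hm.ennreal_ofReal).aemeasurable
  have h := hoelder_interp μ (fun ω => ENNReal.ofReal (X ω)) (fun _ => 1) hmG
    aemeasurable_const hq0 hq1
  simp only [ENNReal.one_rpow, mul_one, lintegral_one, measure_univ] at h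
  rw [lint_one hm h0 hC hint, ← conv_eq hm h0 hC hq0] at h
  simp only [ENNReal.one_rpow, mul_one] at h
  exact (ENNReal.ofReal_le_one).mp h

include hm h0 hC hint in
lemma interp_lt_one {q p : ℝ} (hq0 : 0 < q) (hqp : q < p) (hp1 : p < 1) :
    ∫ ω, X ω ^ p ∂μ ≤ (∫ ω, X ω ^ q ∂μ) ^ ((1 - p) / (1 - q)) := by
  set θ := (1 - p) / (1 - q) with hθ
  have hq1 : q < 1 := hqp.trans hp1
  have h1q : (1:ℝ) - q ≠ 0 := by linarith
  have hθ0 : 0 < θ := div_pos (by linarith) (by linarith)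
  have hθ1 : θ < 1 := (div_lt_one (by linarith)).2 (by linarith)
  have hmG : AEMeasurable (fun ω => ENNReal.ofReal (X ω)) μ :=
    (hm.ennreal_ofReal).aemeasurable
  have h := hoelder_interp μ (fun ω => (ENNReal.ofReal (X ω)) ^ q)
    (fun ω => ENNReal.ofReal (X ω)) (hmG.pow_const q) hmG hθ0 hθ1
  have hexp : q * θ + (1 - θ) = p := by
    rw [hθ]; field_simp; ring
  have heq : ∀ ω : Ω, ((ENNReal.ofReal (X ω)) ^ q) ^ θ * (ENNReal.ofReal (X ω)) ^ (1 - θ)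
      = (ENNReal.ofReal (X ω)) ^ p := by
    intro ω
    rw [← ENNReal.rpow_mul, ← ENNReal.rpow_add_of_nonneg _ _
      (mul_nonneg hq0.le hθ0.le) (by linarith), hexp]
  rw [lintegral_congr heq, lint_one hm h0 hC hint] at h
  simp only [ENNReal.one_rpow, mul_one] at h
  rw [← conv_eq hm h0 hC (hq0.trans hqp), ← conv_eq hm h0 hC hq0] at h
  rw [ENNReal.ofReal_rpow_of_nonneg (integral_nonneg fun ω => Real.rpow_nonneg (h0 ω) q)
    hθ0.le] at h
  exact (ENNReal.ofReal_le_ofReal_iff (Real.rpow_nonneg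
    (integral_nonneg fun ω => Real.rpow_nonneg (h0 ω) q) θ)).mp h

include hm h0 hC hint in
lemma interp_gt_one {q p : ℝ} (hq0 : 0 < q) (hq1 : q < 1) (hp1 : 1 < p) :
    1 ≤ (∫ ω, X ω ^ q ∂μ) ^ ((p - 1) / (p - q)) *
      (∫ ω, X ω ^ p ∂μ) ^ ((1 - q) / (p - q)) := by
  set θ := (p - 1) / (p - q) with hθ
  have hpq : q < p := hq1.trans hp1
  have hpq' : p - q ≠ 0 := by linarith
  have hθ0 : 0 < θ := div_pos (by linarith) (by linarith)
  have hθ1 : θ < 1 := (div_lt_one (by linarith)).2 (by linarith)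
  have hmG : AEMeasurable (fun ω => ENNReal.ofReal (X ω)) μ :=
    (hm.ennreal_ofReal).aemeasurable
  have h := hoelder_interp μ (fun ω => (ENNReal.ofReal (X ω)) ^ q)
    (fun ω => (ENNReal.ofReal (X ω)) ^ p) (hmG.pow_const q) (hmG.pow_const p) hθ0 hθ1
  have hexp : q * θ + p * (1 - θ) = 1 := by
    rw [hθ]; field_simp; ring
  have heq : ∀ ω : Ω, ((ENNReal.ofReal (X ω)) ^ q) ^ θ * ((ENNReal.ofReal (X ω)) ^ p) ^ (1 - θ)
      = ENNReal.ofReal (X ω) := by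
    intro ω
    rw [← ENNReal.rpow_mul, ← ENNReal.rpow_mul, ← ENNReal.rpow_add_of_nonneg _ _
      (mul_nonneg hq0.le hθ0.le) (mul_nonneg (by linarith) (by linarith)), hexp,
      ENNReal.rpow_one]
  rw [lintegral_congr heq, lint_one hm h0 hC hint] at h
  rw [← conv_eq hm h0 hC hq0, ← conv_eq hm h0 hC (one_pos.trans hp1)] at h
  have hq_nn : (0:ℝ) ≤ ∫ ω, X ω ^ q ∂μ := integral_nonneg fun ω => Real.rpow_nonneg (h0 ω) q
  have hp_nn : (0:ℝ) ≤ ∫ ω, X ω ^ p ∂μ := integral_nonneg fun ω => Real.rpow_nonneg (h0 ω) p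
  rw [ENNReal.ofReal_rpow_of_nonneg hq_nn hθ0.le,
    ENNReal.ofReal_rpow_of_nonneg hp_nn (by linarith),
    ← ENNReal.ofReal_mul (Real.rpow_nonneg hq_nn θ)] at h
  have hθeq : 1 - θ = (1 - q) / (p - q) := by
    rw [hθ]; field_simp; ring
  rw [← hθeq]
  exact (ENNReal.one_le_ofReal).mp h
end Key

theorem mori_szekely_sup_eq_limit {Ω : Type*} [MeasurableSpace Ω] (μ : Measure Ω)
    [IsProbabilityMeasure μ] (A : ℕ → Set Ω) (hA : ∀ n, MeasurableSet (A n))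
    (hpos : ∀ n, 0 < μ (A n))
    (hdiv : Tendsto (fun n => ∑ k ∈ Finset.range n, (μ (A k)).toReal) atTop atTop)
    (L : ℝ)
    (hL : Tendsto (fun p : ℝ =>
        Filter.limsup (fun n =>
          ∫ ω, ((∑ i ∈ Finset.range n, (A i).indicator (1 : Ω → ℝ) ω) /
              (∑ i ∈ Finset.range n, (μ (A i)).toReal)) ^ p ∂μ) atTop)
      (nhdsWithin 0 (Set.Ioi 0)) (nhds L)) :
    sSup {x : ℝ | ∃ p : ℝ, 0 < p ∧ p ≠ 1 ∧
        x = (Filter.limsup (fun n =>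
          ∫ ω, ((∑ i ∈ Finset.range n, (A i).indicator (1 : Ω → ℝ) ω) /
              (∑ i ∈ Finset.range n, (μ (A i)).toReal)) ^ p ∂μ) atTop) ^ (1 / (1 - p))} = L := by
  classical
  -- abbreviations
  set X : ℕ → Ω → ℝ := fun n ω =>
    (∑ i ∈ Finset.range n, (A i).indicator (1 : Ω → ℝ) ω) /
      (∑ i ∈ Finset.range n, (μ (A i)).toReal) with hXdef
  set f : ℝ → ℕ → ℝ := fun p n => ∫ ω, X n ω ^ p ∂μ with hfdef
  set F : ℝ → ℝ := fun p => Filter.limsup (f p) atTop with hFdef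
  -- basic facts
  have hS : ∀ n : ℕ, 1 ≤ n → 0 < ∑ i ∈ Finset.range n, (μ (A i)).toReal := by
    intro n hn
    apply Finset.sum_pos
    · exact fun i _ => ENNReal.toReal_pos (hpos i).ne' (measure_ne_top μ _)
    · exact Finset.nonempty_range_iff.2 (by omega)
  have hmX : ∀ n, Measurable (X n) := by
    intro n
    apply Measurable.div_const
    exact Finset.measurable_sum _ fun i _ => measurable_const.indicator (hA i)
  have h0X : ∀ n ω, 0 ≤ X n ω := by
    intro n ω
    apply div_nonneg
    · exact Finset.sum_nonneg fun i _ => Set.indicator_nonneg (fun _ _ => zero_le_one) ω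
    · exact Finset.sum_nonneg fun i _ => ENNReal.toReal_nonneg
  have hCX : ∀ n, 1 ≤ n → ∀ ω, X n ω ≤ (n : ℝ) / (∑ i ∈ Finset.range n, (μ (A i)).toReal) := by
    intro n hn ω
    rw [hXdef]
    simp only
    rw [div_le_div_iff_of_pos_right (hS n hn)]
    calc (∑ i ∈ Finset.range n, (A i).indicator (1 : Ω → ℝ) ω)
        ≤ ∑ i ∈ Finset.range n, (1 : ℝ) := by
          apply Finset.sum_le_sum
          intro i _
          by_cases h : ω ∈ A i
          · simp [Set.indicator_of_mem h]
          · simp [Set.indicator_of_notMem h]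
      _ = n := by simp
  have hint : ∀ n, 1 ≤ n → ∫ ω, X n ω ∂μ = 1 := by
    intro n hn
    rw [hXdef]
    simp only
    rw [integral_div]
    rw [integral_finset_sum (Finset.range n) (f := fun i ω => (A i).indicator (1 : Ω → ℝ) ω)
      (fun i _ => (integrable_const (1:ℝ)).indicator (hA i))]
    rw [div_eq_one_iff_eq (hS n hn).ne']
    congr 1
    ext i
    rw [integral_indicator_one (hA i)]; rfl
  -- nonnegativity and boundedness of f
  have hfnn : ∀ p n, 0 ≤ f p n := fun p n =>
    integral_nonneg fun ω => Real.rpow_nonneg (h0X n ω) p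
  have hf_le_one : ∀ q : ℝ, 0 < q → q < 1 → ∀ n, f q n ≤ 1 := by
    intro q hq0 hq1 n
    rcases Nat.eq_zero_or_pos n with hn | hn
    · subst hn
      have : f q 0 = 0 := by
        rw [hfdef]
        simp only [hXdef, Finset.range_zero, Finset.sum_empty, zero_div,
          Real.zero_rpow hq0.ne', integral_zero]
      rw [this]; norm_num
    · exact jensen_le_one (hmX n) (h0X n) (hCX n hn) (hint n hn) hq0 hq1
  have hbddq : ∀ q : ℝ, 0 < q → q < 1 → IsBoundedUnder (· ≤ ·) atTop (f q) :=
    fun q hq0 hq1 => isBoundedUnder_of ⟨1, hf_le_one q hq0 hq1⟩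
  have hcobdd : ∀ p : ℝ, IsCoboundedUnder (· ≤ ·) atTop (f p) :=
    fun p => isCoboundedUnder_le_of_le atTop (x := 0) (fun n => hfnn p n)
  have hFnn : ∀ q : ℝ, 0 < q → q < 1 → 0 ≤ F q := by
    intro q hq0 hq1
    exact le_limsup_of_frequently_le
      ((Filter.Eventually.of_forall (hfnn q)).frequently) (hbddq q hq0 hq1)
  have hF_le_one : ∀ q : ℝ, 0 < q → q < 1 → F q ≤ 1 := by
    intro q hq0 hq1
    exact limsup_le_of_le (hcobdd q) (Filter.Eventually.of_forall (hf_le_one q hq0 hq1))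
  have hIoo : ∀ᶠ q in nhdsWithin (0:ℝ) (Set.Ioi 0), q ∈ Set.Ioo (0:ℝ) 1 := by
    filter_upwards [eventually_mem_nhdsWithin,
      eventually_nhdsWithin_of_eventually_nhds (eventually_lt_nhds zero_lt_one)] with q h1 h2
    exact ⟨h1, h2⟩
  have hLnn : 0 ≤ L := ge_of_tendsto hL (hIoo.mono fun q hq => hFnn q hq.1 hq.2)
  -- claim 1 : p in (0,1)
  have claim1 : ∀ p : ℝ, 0 < p → p < 1 → F p ^ (1 / (1 - p)) ≤ L := by
    intro p hp0 hp1
    have key : ∀ q : ℝ, 0 < q → q < p → F p ^ (1 / (1 - p)) ≤ F q := by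
      intro q hq0 hqp
      have hq1 : q < 1 := hqp.trans hp1
      set θ := (1 - p) / (1 - q) with hθ
      have hθ0 : 0 < θ := div_pos (by linarith) (by linarith)
      have hstepA : ∀ ε : ℝ, 0 < ε → F p ≤ (F q + ε) ^ θ := by
        intro ε hε
        have hlt : F q < F q + ε := by linarith
        have hev := eventually_lt_of_limsup_lt hlt (hbddq q hq0 hq1)
        refine limsup_le_of_le (hcobdd p) ?_
        filter_upwards [hev, eventually_ge_atTop 1] with n hn hn1
        calc f p n ≤ (f q n) ^ θ :=
              interp_lt_one (hmX n) (h0X n) (hCX n hn1) (hint n hn1) hq0 hqp hp1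
          _ ≤ (F q + ε) ^ θ := Real.rpow_le_rpow (hfnn q n) hn.le hθ0.le
      have hstepB : F p ≤ F q ^ θ := by
        have hc : Tendsto (fun ε : ℝ => (F q + ε) ^ θ) (nhdsWithin 0 (Set.Ioi 0))
            (nhds (F q ^ θ)) := by
          have h1 : Tendsto (fun ε : ℝ => F q + ε) (nhdsWithin 0 (Set.Ioi 0)) (nhds (F q)) := by
            have h2 : Tendsto (fun ε : ℝ => F q + ε) (nhds 0) (nhds (F q + 0)) :=
              tendsto_const_nhds.add tendsto_id
            simpa using h2.mono_left nhdsWithin_le_nhds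
          exact (Real.continuousAt_rpow_const (F q) θ (Or.inr hθ0.le)).tendsto.comp h1
        exact ge_of_tendsto hc (eventually_mem_nhdsWithin.mono fun ε hε => hstepA ε hε)
      have hFp_nn : 0 ≤ F p := hFnn p hp0 hp1
      have hFq_nn : 0 ≤ F q := hFnn q hq0 hq1
      calc F p ^ (1 / (1 - p)) ≤ (F q ^ θ) ^ (1 / (1 - p)) :=
            Real.rpow_le_rpow hFp_nn hstepB
              (by have h1p : (0:ℝ) < 1 - p := by linarith
                  positivity)
        _ = F q ^ (1 / (1 - q)) := by
            rw [← Real.rpow_mul hFq_nn]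
            congr 1
            rw [hθ, div_mul_div_comm, mul_one, mul_comm, ← div_div,
              div_self (by linarith : (1:ℝ) - p ≠ 0)]
        _ ≤ F q := by
            rcases hFq_nn.eq_or_lt with h | h
            · rw [← h, Real.zero_rpow (one_div_ne_zero (by linarith))]
            · nth_rewrite 2 [← Real.rpow_one (F q)]
              apply Real.rpow_le_rpow_of_exponent_ge h (hF_le_one q hq0 hq1)
              rw [le_div_iff₀ (by linarith : (0:ℝ) < 1 - q)]
              linarith
    refine ge_of_tendsto hL ?_
    filter_upwards [hIoo, eventually_nhdsWithin_of_eventually_nhds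
      (eventually_lt_nhds hp0)] with q hq hqp
    exact key q hq.1 hqp
  -- claim 2 : p > 1
  have claim2 : ∀ p : ℝ, 1 < p → F p ^ (1 / (1 - p)) ≤ L := by
    intro p hp1
    have h1p : (1:ℝ) - p ≠ 0 := by linarith
    by_cases hbd : IsBoundedUnder (· ≤ ·) atTop (f p)
    swap
    · have hF0 : F p = 0 := by
        rw [hFdef]
        simp only
        rw [limsup_eq]
        convert Real.sInf_empty using 2
        · rfl
        rw [Set.eq_empty_iff_forall_notMem]
        intro a ha
        exact hbd (isBoundedUnder_of_eventually_le ha)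
      rw [hF0, Real.zero_rpow (one_div_ne_zero h1p)]
      exact hLnn
    -- bounded case
    have hfp1 : ∀ n : ℕ, 1 ≤ n → 1 ≤ f p n := by
      intro n hn
      have h := interp_gt_one (hmX n) (h0X n) (hCX n hn) (hint n hn)
        (q := 1/2) (by norm_num) (by norm_num) hp1
      have hq := jensen_le_one (hmX n) (h0X n) (hCX n hn) (hint n hn)
        (q := 1/2) (by norm_num) (by norm_num)
      by_contra hlt
      push_neg at hlt
      have hθ0 : (0:ℝ) ≤ (p - 1) / (p - 1/2) :=
        div_nonneg (by linarith) (by linarith)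
      have hc0 : (0:ℝ) < (1 - 1/2) / (p - 1/2) :=
        div_pos (by norm_num) (by linarith)
      have h1 : (f (1/2) n) ^ ((p - 1) / (p - 1/2)) ≤ 1 :=
        Real.rpow_le_one (hfnn _ n) hq hθ0
      have h2 : (f p n) ^ ((1 - 1/2) / (p - 1/2)) < 1 :=
        Real.rpow_lt_one (hfnn p n) hlt hc0
      nlinarith [Real.rpow_nonneg (hfnn p n) ((1 - 1/2) / (p - 1/2)),
        Real.rpow_nonneg (hfnn (1/2) n) ((p - 1) / (p - 1/2))]
    have hFp1 : 1 ≤ F p := by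
      refine le_limsup_of_frequently_le ?_ hbd
      exact ((eventually_ge_atTop 1).mono fun n hn => hfp1 n hn).frequently
    have hFp0 : (0:ℝ) < F p := lt_of_lt_of_le one_pos hFp1
    have hkey : ∀ q : ℝ, 0 < q → q < 1 → F p ^ ((1 - q) / (1 - p)) ≤ F q := by
      intro q hq0 hq1
      have hpq : q < p := hq1.trans hp1
      set θ := (p - 1) / (p - q) with hθ
      have hθ0 : 0 < θ := div_pos (by linarith) (by linarith)
      have hθ1' : 0 < 1 - θ := by
        have : θ < 1 := (div_lt_one (by linarith)).2 (by linarith)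
        linarith
      have hstep : ∀ ε : ℝ, 0 < ε → (F p + ε) ^ ((1 - q) / (1 - p)) ≤ F q := by
        intro ε hε
        have hlt : F p < F p + ε := by linarith
        have hev := eventually_lt_of_limsup_lt hlt hbd
        refine le_limsup_of_frequently_le ?_ (hbddq q hq0 hq1)
        refine Filter.Eventually.frequently ?_
        filter_upwards [hev, eventually_ge_atTop 1] with n hn hn1
        have h := interp_gt_one (hmX n) (h0X n) (hCX n hn1) (hint n hn1) hq0 hq1 hp1
        have hb : (0:ℝ) < F p + ε := by linarith
        have hb1 : (0:ℝ) < (F p + ε) ^ (1 - θ) := Real.rpow_pos_of_pos hb _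
        have hmono : (f p n) ^ ((1 - q)/(p - q)) ≤ (F p + ε) ^ (1 - θ) := by
          have hpq0 : p - q ≠ 0 := by linarith
          have : (1 - q)/(p - q) = 1 - θ := by
            rw [hθ, eq_sub_iff_add_eq, ← add_div,
              show (1 - q) + (p - 1) = p - q by ring, div_self hpq0]
          rw [this]
          exact Real.rpow_le_rpow (hfnn p n) hn.le hθ1'.le
        have h3 : (1:ℝ) ≤ (f q n) ^ θ * (F p + ε) ^ (1 - θ) := by
          calc (1:ℝ) ≤ (f q n) ^ ((p - 1)/(p - q)) * (f p n) ^ ((1 - q)/(p - q)) := h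
            _ ≤ (f q n) ^ ((p - 1)/(p - q)) * ((F p + ε) ^ (1 - θ)) := by
                exact mul_le_mul_of_nonneg_left hmono (Real.rpow_nonneg (hfnn q n) _)
        have h4 : 1 / (F p + ε) ^ (1 - θ) ≤ (f q n) ^ θ :=
          (div_le_iff₀ hb1).mpr (by linarith)
        have h5 : (1 / (F p + ε) ^ (1 - θ)) ^ (1/θ) ≤ ((f q n) ^ θ) ^ (1/θ) :=
          Real.rpow_le_rpow (by positivity) h4 (by positivity)
        have h6 : ((f q n) ^ θ) ^ (1/θ) = f q n := by
          rw [← Real.rpow_mul (hfnn q n), mul_one_div, div_self hθ0.ne', Real.rpow_one]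
        have h7 : (1 / (F p + ε) ^ (1 - θ)) ^ (1/θ) = (F p + ε) ^ ((1 - q) / (1 - p)) := by
          rw [one_div ((F p + ε) ^ (1 - θ)), ← Real.rpow_neg hb.le,
            ← Real.rpow_mul hb.le]
          congr 1
          have hpq0 : p - q ≠ 0 := by linarith
          have hp1' : p - 1 ≠ 0 := by linarith
          rw [hθ]
          field_simp
          ring
        rw [h6] at h5
        rw [h7] at h5
        exact h5
      have hc : Tendsto (fun ε : ℝ => (F p + ε) ^ ((1 - q) / (1 - p)))
          (nhdsWithin 0 (Set.Ioi 0)) (nhds (F p ^ ((1 - q) / (1 - p)))) := by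
        have h1 : Tendsto (fun ε : ℝ => F p + ε) (nhdsWithin 0 (Set.Ioi 0)) (nhds (F p)) := by
          have h2 : Tendsto (fun ε : ℝ => F p + ε) (nhds 0) (nhds (F p + 0)) :=
            tendsto_const_nhds.add tendsto_id
          simpa using h2.mono_left nhdsWithin_le_nhds
        exact (Real.continuousAt_rpow_const (F p) _ (Or.inl hFp0.ne')).tendsto.comp h1
      exact le_of_tendsto hc (eventually_mem_nhdsWithin.mono fun ε hε => hstep ε hε)
    -- let q → 0
    have hexp : Tendsto (fun q : ℝ => F p ^ ((1 - q) / (1 - p)))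
        (nhdsWithin 0 (Set.Ioi 0)) (nhds (F p ^ (1 / (1 - p)))) := by
      have hcont : Continuous (fun q : ℝ => F p ^ ((1 - q) / (1 - p))) := by
        simp only [Real.rpow_def_of_pos hFp0]
        exact Real.continuous_exp.comp
          (continuous_const.mul ((continuous_const.sub continuous_id).div_const _))
      have := (hcont.tendsto 0).mono_left (nhdsWithin_le_nhds (s := Set.Ioi (0:ℝ)))
      simpa using this
    refine le_of_tendsto_of_tendsto hexp hL ?_
    filter_upwards [hIoo] with q hq
    exact hkey q hq.1 hq.2
  -- conclusion
  have hhalf : F (1/2) ^ (1 / (1 - (1/2 : ℝ))) ∈ {x : ℝ | ∃ p : ℝ, 0 < p ∧ p ≠ 1 ∧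
      x = F p ^ (1 / (1 - p))} := ⟨1/2, by norm_num, by norm_num, rfl⟩
  refine csSup_eq_of_forall_le_of_forall_lt_exists_gt ⟨_, hhalf⟩ ?_ ?_
  · rintro a ⟨p, hp0, hp1, rfl⟩
    rcases lt_or_gt_of_ne hp1 with h | h
    · exact claim1 p hp0 h
    · exact claim2 p h
  · intro w hw
    rcases lt_or_ge w 0 with hw0 | hw0
    · exact ⟨_, hhalf, lt_of_lt_of_le hw0 (Real.rpow_nonneg
        (hFnn (1/2) (by norm_num) (by norm_num)) _)⟩
    · have hLpos : 0 < L := lt_of_le_of_lt hw0 hw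
      have hg : Tendsto (fun p : ℝ => F p ^ (1 / (1 - p)))
          (nhdsWithin 0 (Set.Ioi 0)) (nhds L) := by
        have h2 : Tendsto (fun p : ℝ => (1:ℝ) / (1 - p)) (nhdsWithin 0 (Set.Ioi 0))
            (nhds 1) := by
          have hc : ContinuousAt (fun p : ℝ => (1:ℝ) / (1 - p)) 0 :=
            (continuousAt_const.div ((continuous_const.sub continuous_id).continuousAt)
              (by norm_num))
          have := hc.tendsto.mono_left (nhdsWithin_le_nhds (s := Set.Ioi (0:ℝ)))
          simpa using this
        have h3 : Tendsto (fun p : ℝ => (F p, (1:ℝ) / (1 - p)))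
            (nhdsWithin 0 (Set.Ioi 0)) (nhds (L, 1)) := hL.prodMk_nhds h2
        have h4 := (Real.continuousAt_rpow (L, 1) (Or.inl hLpos.ne')).tendsto.comp h3
        simpa [Real.rpow_one, Function.comp_def] using h4
      have hev : ∀ᶠ p in nhdsWithin (0:ℝ) (Set.Ioi 0),
          w < F p ^ (1 / (1 - p)) := hg.eventually (eventually_gt_nhds hw)
      obtain ⟨p, hp, hpI⟩ := (hev.and hIoo).exists
      exact ⟨F p ^ (1 / (1 - p)), ⟨p, hpI.1, ne_of_lt hpI.2, rfl⟩, hp⟩
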